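/- arXiv:2108.01638 — 4 statements merged into one kernel-verified Lean document; each statement's English description precedes it below -/
import Mathlib

section
/- Let Y be a Banach lattice. If for every 0 < ε < 1 there exists η > 0 such that for all u, v ∈ Y with 0 ≤ u ≤ v and ‖v − u‖ > (1 − η)‖v‖ one has ‖u‖ ≤ ε‖v‖, then Y is uniformly monotone: for every 0 < ε < 1 there is 0 < δ ≤ ε such that x, y ∈ Y⁺ with ‖x‖ = 1 and ‖x + y‖ ≤ 1 + δ implies ‖y‖ ≤ ε. -/
/-- The homogeneous monotonicity condition implies uniform monotonicity. -/
theorem stmt_2 {Y : Type*} [NormedAddCommGroup Y] [Lattice Y] [IsOrderedAddMonoid Y] [HasSolidNorm Y] [CompleteSpace Y]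
    (h : ∀ ε : ℝ, 0 < ε → ε < 1 → ∃ η : ℝ, 0 < η ∧
      ∀ u v : Y, 0 ≤ u → u ≤ v → ‖v - u‖ > (1 - η) * ‖v‖ → ‖u‖ ≤ ε * ‖v‖) :
    ∀ ε : ℝ, 0 < ε → ε < 1 → ∃ δ : ℝ, 0 < δ ∧ δ ≤ ε ∧
      ∀ x y : Y, 0 ≤ x → 0 ≤ y → ‖x‖ = 1 → ‖x + y‖ ≤ 1 + δ → ‖y‖ ≤ ε := by
  intro ε hε hε1
  obtain ⟨η, hη, hmain⟩ := h (ε / 2) (by linarith) (by linarith)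
  refine ⟨min ε (min (η / 2) (1 / 2)), ?_, min_le_left _ _, ?_⟩
  · positivity
  intro x y hx hy hxn hxyn
  set δ := min ε (min (η / 2) (1 / 2)) with hδdef
  have hδη : δ ≤ η / 2 := le_trans (min_le_right _ _) (min_le_left _ _)
  have hδhalf : δ ≤ 1 / 2 := le_trans (min_le_right _ _) (min_le_right _ _)
  have hkey : ‖y‖ ≤ ε / 2 * ‖x + y‖ := by
    apply hmain y (x + y) hy (le_add_of_nonneg_left hx)
    have : ‖x + y - y‖ = 1 := by simpa using hxn
    rw [this]
    have hn : 0 ≤ ‖x + y‖ := norm_nonneg _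
    have hδ0 : (0:ℝ) ≤ δ := by positivity
    rcases le_or_gt (1 - η) 0 with h1 | h1
    · nlinarith
    · have h2 := mul_le_mul_of_nonneg_left hxyn h1.le
      nlinarith [mul_nonneg hη.le hδ0]
  have hn : ‖x + y‖ ≤ 1 + δ := hxyn
  nlinarith [norm_nonneg (x + y)]
end

section
/- Let L be a locally compact Hausdorff topological space, Y a Banach lattice, S₁ and S₂ positive bounded linear operators from C₀(L) to Y, and g₁, g₂ nonnegative functions in C₀(L). Then the operator U : C₀(L) → Y defined by U(f) = S₁(f·g₁) + S₂(f·g₂) is bounded with operator norm ‖U‖ = ‖S₁(g₁) + S₂(g₂)‖. -/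
open scoped ZeroAtInfty
open Filter
set_option maxHeartbeats 1000000

lemma c0_norm_le' {L : Type*} [TopologicalSpace L] (f : C₀(L, ℝ)) {C : ℝ} (hC : 0 ≤ C)
    (h : ∀ t, ‖f t‖ ≤ C) : ‖f‖ ≤ C := by
  rw [← ZeroAtInftyContinuousMap.norm_toBCF_eq_norm]
  exact (BoundedContinuousFunction.norm_le hC).2 h

lemma c0_norm_coe_le' {L : Type*} [TopologicalSpace L] (f : C₀(L, ℝ)) (t : L) :
    ‖f t‖ ≤ ‖f‖ := by
  rw [← ZeroAtInftyContinuousMap.norm_toBCF_eq_norm]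
  exact BoundedContinuousFunction.norm_coe_le_norm f.toBCF t

/-- For positive operators `S₁, S₂ : C₀(L) → Y` and nonnegative `g₁, g₂ ∈ C₀(L)`, the operator
`U f = S₁ (f·g₁) + S₂ (f·g₂)` has norm `‖S₁ g₁ + S₂ g₂‖`. -/
theorem stmt_3 {L : Type*} [TopologicalSpace L] [LocallyCompactSpace L] [T2Space L]
    {Y : Type*} [NormedAddCommGroup Y] [Lattice Y] [HasSolidNorm Y] [IsOrderedAddMonoid Y] [NormedSpace ℝ Y] [CompleteSpace Y]
    (S₁ S₂ : C₀(L, ℝ) →L[ℝ] Y)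
    (hS₁ : ∀ f : C₀(L, ℝ), (∀ t, 0 ≤ f t) → 0 ≤ S₁ f)
    (hS₂ : ∀ f : C₀(L, ℝ), (∀ t, 0 ≤ f t) → 0 ≤ S₂ f)
    (g₁ g₂ : C₀(L, ℝ)) (hg₁ : ∀ t, 0 ≤ g₁ t) (hg₂ : ∀ t, 0 ≤ g₂ t)
    (U : C₀(L, ℝ) →L[ℝ] Y) (hU : ∀ f : C₀(L, ℝ), U f = S₁ (f * g₁) + S₂ (f * g₂)) :
    ‖U‖ = ‖S₁ g₁ + S₂ g₂‖ := by
  have habs : ∀ (S : C₀(L, ℝ) →L[ℝ] Y), (∀ h : C₀(L, ℝ), (∀ t, 0 ≤ h t) → 0 ≤ S h) →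
      ∀ (g : C₀(L, ℝ)), (∀ t, 0 ≤ g t) → ∀ f : C₀(L, ℝ), ‖f‖ = 1 → |S (f * g)| ≤ S g := by
    intro S hS g hgpos f hfn
    have hf1 : ∀ t, |f t| ≤ 1 := fun t => by
      have := c0_norm_coe_le' f t
      rw [hfn] at this
      simpa [Real.norm_eq_abs] using this
    rw [abs_le']
    constructor
    · have h0 : 0 ≤ S (g - f * g) := hS _ (fun t => by
        have ht : (g - f * g) t = g t - f t * g t := by simp
        rw [ht]
        nlinarith [hf1 t, hgpos t, le_abs_self (f t)])
      rw [map_sub, sub_nonneg] at h0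
      exact h0
    · have h0 : 0 ≤ S (g + f * g) := hS _ (fun t => by
        have ht : (g + f * g) t = g t + f t * g t := by simp
        rw [ht]
        nlinarith [hf1 t, hgpos t, neg_abs_le (f t)])
      rw [map_add] at h0
      exact neg_le_iff_add_nonneg.mpr h0
  have hpos : (0 : Y) ≤ S₁ g₁ + S₂ g₂ := add_nonneg (hS₁ g₁ hg₁) (hS₂ g₂ hg₂)
  -- upper bound
  have hub : ‖U‖ ≤ ‖S₁ g₁ + S₂ g₂‖ := by
    refine ContinuousLinearMap.opNorm_le_of_unit_norm (norm_nonneg _) fun f hfn => ?_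
    have hUf : |U f| ≤ S₁ g₁ + S₂ g₂ := by
      rw [hU]
      exact (abs_add_le _ _).trans
        (add_le_add (habs S₁ hS₁ g₁ hg₁ f hfn) (habs S₂ hS₂ g₂ hg₂ f hfn))
    refine HasSolidNorm.solid ?_
    rwa [abs_of_nonneg hpos]
  refine le_antisymm hub ?_
  -- lower bound
  refine le_of_forall_pos_le_add fun ε hε => ?_
  set g : C₀(L, ℝ) := g₁ + g₂ with hgdef
  have hgpos : ∀ t, 0 ≤ g t := fun t => by
    have : g t = g₁ t + g₂ t := by simp [hgdef]
    rw [this]; exact add_nonneg (hg₁ t) (hg₂ t)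
  set C : ℝ := ‖S₁‖ + ‖S₂‖ with hCdef
  have hC0 : 0 ≤ C := add_nonneg S₁.opNorm_nonneg S₂.opNorm_nonneg
  set δ : ℝ := ε / (C + 1) with hδdef
  have hδ : 0 < δ := div_pos hε (by linarith)
  -- approximate unit
  have hcont : Continuous fun t => min 1 (g t / δ) :=
    continuous_const.min ((map_continuous g).div_const δ)
  set fδ : C₀(L, ℝ) := ⟨⟨fun t => min 1 (g t / δ), hcont⟩, by
    refine tendsto_of_tendsto_of_tendsto_of_le_of_le (g := fun _ => (0:ℝ))
      (h := fun t => g t / δ) tendsto_const_nhds ?_ ?_ ?_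
    · simpa using (zero_at_infty g).div_const δ
    · intro t; exact le_min zero_le_one (div_nonneg (hgpos t) hδ.le)
    · intro t; exact min_le_right _ _⟩ with hfδ
  have hfδval : ∀ t, fδ t = min 1 (g t / δ) := fun t => rfl
  have hfδnorm : ‖fδ‖ ≤ 1 := by
    refine c0_norm_le' fδ zero_le_one fun t => ?_
    rw [hfδval, Real.norm_eq_abs, abs_of_nonneg (le_min zero_le_one (div_nonneg (hgpos t) hδ.le))]
    exact min_le_left _ _
  have happrox : ∀ (gi : C₀(L, ℝ)), (∀ t, 0 ≤ gi t) → (∀ t, gi t ≤ g t) →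
      ‖fδ * gi - gi‖ ≤ δ := by
    intro gi hgi hgig
    refine c0_norm_le' _ hδ.le fun t => ?_
    have ht : (fδ * gi - gi) t = min 1 (g t / δ) * gi t - gi t := by
      simp [hfδval]
    rw [Real.norm_eq_abs, ht]
    rcases le_or_gt δ (g t) with h | h
    · have : (1:ℝ) ≤ g t / δ := (one_le_div hδ).2 h
      rw [min_eq_left this]
      simpa using hδ.le
    · have hm0 : 0 ≤ min 1 (g t / δ) := le_min zero_le_one (div_nonneg (hgpos t) hδ.le)
      have hm1 : min 1 (g t / δ) ≤ 1 := min_le_left _ _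
      rw [abs_le]
      constructor <;> nlinarith [hgi t, hgig t]
  have key : ‖S₁ g₁ + S₂ g₂ - U fδ‖ ≤ C * δ := by
    rw [hU]
    have heq : S₁ g₁ + S₂ g₂ - (S₁ (fδ * g₁) + S₂ (fδ * g₂))
        = S₁ (g₁ - fδ * g₁) + S₂ (g₂ - fδ * g₂) := by
      rw [map_sub, map_sub]; abel
    rw [heq]
    have h1 : ‖S₁ (g₁ - fδ * g₁)‖ ≤ ‖S₁‖ * δ := by
      refine (S₁.le_opNorm _).trans ?_
      have := happrox g₁ hg₁ (fun t => by
        have : g t = g₁ t + g₂ t := by simp [hgdef]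
        rw [this]; linarith [hg₂ t])
      rw [← norm_sub_rev] at this
      exact mul_le_mul_of_nonneg_left this (norm_nonneg _)
    have h2 : ‖S₂ (g₂ - fδ * g₂)‖ ≤ ‖S₂‖ * δ := by
      refine (S₂.le_opNorm _).trans ?_
      have := happrox g₂ hg₂ (fun t => by
        have : g t = g₁ t + g₂ t := by simp [hgdef]
        rw [this]; linarith [hg₁ t])
      rw [← norm_sub_rev] at this
      exact mul_le_mul_of_nonneg_left this (norm_nonneg _)
    calc ‖S₁ (g₁ - fδ * g₁) + S₂ (g₂ - fδ * g₂)‖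
        ≤ ‖S₁ (g₁ - fδ * g₁)‖ + ‖S₂ (g₂ - fδ * g₂)‖ := norm_add_le _ _
      _ ≤ ‖S₁‖ * δ + ‖S₂‖ * δ := add_le_add h1 h2
      _ = C * δ := by rw [hCdef]; ring
  have hCδ : C * δ ≤ ε := by
    rw [hδdef]
    rw [div_eq_mul_inv]
    have h1 : C * (ε * (C + 1)⁻¹) = ε * (C * (C + 1)⁻¹) := by ring
    rw [h1]
    have h2 : C * (C + 1)⁻¹ ≤ 1 := by
      rw [← div_eq_mul_inv, div_le_one (by linarith)]; linarith
    nlinarith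
  calc ‖S₁ g₁ + S₂ g₂‖ ≤ ‖U fδ‖ + ‖S₁ g₁ + S₂ g₂ - U fδ‖ := by
        have := norm_add_le (U fδ) (S₁ g₁ + S₂ g₂ - U fδ)
        simpa using this
    _ ≤ ‖U‖ * ‖fδ‖ + C * δ := add_le_add (U.le_opNorm fδ) key
    _ ≤ ‖U‖ * 1 + ε := add_le_add (mul_le_mul_of_nonneg_left hfδnorm U.opNorm_nonneg) hCδ
    _ = ‖U‖ + ε := by ring
end

section
/- Let L be a locally compact Hausdorff space with at least two points, Y a Banach lattice, and u, v ∈ Y with 0 ≤ u ≤ v and ‖v‖ = 1. Choose t₁, t₂ ∈ L and f₁, f₂ ∈ C₀(L) with 0 ≤ fᵢ ≤ 1, fᵢ(tᵢ) = 1 and disjoint supports. Then the operator S : C₀(L) → Y defined by S(f) = f(t₁)·(v − u) + f(t₂)·u is a positive bounded linear operator with ‖S‖ = 1, and ‖S(f₁)‖ = ‖v − u‖. -/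
open scoped ZeroAtInfty

private lemma aux_pow2_semiclosed {Y : Type*} [Lattice Y] [AddCommGroup Y]
    [CovariantClass Y Y (· + ·) (· ≤ ·)] :
    ∀ (k : ℕ) (a : Y), 0 ≤ 2 ^ k • a → 0 ≤ a := by
  intro k
  induction k with
  | zero => intro a h; simpa using h
  | succ n ih =>
    intro a h
    have h2 : (2 : ℕ) ^ (n + 1) • a = 2 ^ n • (2 • a) := by
      rw [← mul_nsmul, pow_succ, mul_comm]
    exact nsmul_two_semiclosed (ih (2 • a) (h2 ▸ h))

private lemma aux_smul_nonneg {Y : Type*} [NormedAddCommGroup Y] [Lattice Y] [HasSolidNorm Y] [IsOrderedAddMonoid Y] [NormedSpace ℝ Y]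
    {c : ℝ} {w : Y} (hc : 0 ≤ c) (hw : 0 ≤ w) : 0 ≤ c • w := by
  -- dyadic rationals
  have dyadic : ∀ (m k : ℕ), 0 ≤ ((m : ℝ) / 2 ^ k) • w := by
    intro m k
    apply aux_pow2_semiclosed k
    have : (2 : ℕ) ^ k • (((m : ℝ) / 2 ^ k) • w) = m • w := by
      rw [← Nat.cast_smul_eq_nsmul ℝ, smul_smul]
      push_cast
      rw [mul_div_cancel₀ _ (by positivity)]
      rw [← Nat.cast_smul_eq_nsmul ℝ]
    rw [this]
    exact nsmul_nonneg hw m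
  -- approximate c from below by dyadics
  set q : ℕ → ℝ := fun n => (⌊c * 2 ^ n⌋₊ : ℝ) / 2 ^ n with hq
  have hql : ∀ n, c - (1 / 2) ^ n ≤ q n := by
    intro n
    have h1 : c * 2 ^ n - 1 < (⌊c * 2 ^ n⌋₊ : ℝ) :=
      Nat.sub_one_lt_floor _
    have h2 : (0 : ℝ) < 2 ^ n := by positivity
    rw [hq]
    rw [le_div_iff₀ h2]
    have : (1 / 2 : ℝ) ^ n * 2 ^ n = 1 := by
      rw [← mul_pow]; norm_num
    nlinarith [h1, this]
  have hqu : ∀ n, q n ≤ c := by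
    intro n
    have h2 : (0 : ℝ) < 2 ^ n := by positivity
    rw [hq, div_le_iff₀ h2]
    exact Nat.floor_le (by positivity)
  have htq : Filter.Tendsto q Filter.atTop (nhds c) := by
    have hlow : Filter.Tendsto (fun n => c - (1 / 2 : ℝ) ^ n) Filter.atTop (nhds c) := by
      have : Filter.Tendsto (fun n => (1 / 2 : ℝ) ^ n) Filter.atTop (nhds 0) :=
        tendsto_pow_atTop_nhds_zero_of_lt_one (by norm_num) (by norm_num)
      simpa using Filter.Tendsto.const_sub c this
    exact tendsto_of_tendsto_of_tendsto_of_le_of_le hlow tendsto_const_nhds hql hqu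
  have hts : Filter.Tendsto (fun n => q n • w) Filter.atTop (nhds (c • w)) :=
    htq.smul_const w
  exact le_of_tendsto_of_tendsto tendsto_const_nhds hts
    (Filter.Eventually.of_forall fun n => dyadic _ _)

private lemma aux_smul_mono {Y : Type*} [NormedAddCommGroup Y] [Lattice Y] [HasSolidNorm Y] [IsOrderedAddMonoid Y] [NormedSpace ℝ Y]
    {a b : ℝ} {w : Y} (hab : a ≤ b) (hw : 0 ≤ w) : a • w ≤ b • w := by
  have := aux_smul_nonneg (sub_nonneg.2 hab) hw
  rw [sub_smul, sub_nonneg] at this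
  exact this

/-- Given `0 ≤ u ≤ v` with `‖v‖ = 1` in a Banach lattice `Y`, points `t₁, t₂` and functions
`f₁, f₂ ∈ C₀(L)` with `0 ≤ fᵢ ≤ 1`, `fᵢ tᵢ = 1` and disjoint supports, the operator
`S f = f t₁ • (v - u) + f t₂ • u` is positive, has norm one, and `‖S f₁‖ = ‖v - u‖`. -/
theorem stmt_13 {L : Type*} [TopologicalSpace L] [LocallyCompactSpace L] [T2Space L]
    {Y : Type*} [NormedAddCommGroup Y] [Lattice Y] [HasSolidNorm Y] [IsOrderedAddMonoid Y] [NormedSpace ℝ Y] [CompleteSpace Y]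
    (u v : Y) (hu : 0 ≤ u) (huv : u ≤ v) (hv : ‖v‖ = 1)
    (t₁ t₂ : L) (f₁ f₂ : C₀(L, ℝ))
    (hf₁ : ∀ t, 0 ≤ f₁ t ∧ f₁ t ≤ 1) (hf₂ : ∀ t, 0 ≤ f₂ t ∧ f₂ t ≤ 1)
    (hf₁t₁ : f₁ t₁ = 1) (hf₂t₂ : f₂ t₂ = 1) (hdisj : f₁ * f₂ = 0)
    (S : C₀(L, ℝ) →L[ℝ] Y) (hS : ∀ f : C₀(L, ℝ), S f = f t₁ • (v - u) + f t₂ • u) :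
    (∀ f : C₀(L, ℝ), (∀ t, 0 ≤ f t) → 0 ≤ S f) ∧ ‖S‖ = 1 ∧ ‖S f₁‖ = ‖v - u‖ := by
  have hvu : (0 : Y) ≤ v - u := sub_nonneg.2 huv
  have hv0 : (0 : Y) ≤ v := hu.trans huv
  -- disjointness pointwise
  have hmul : ∀ t, f₁ t * f₂ t = 0 := by
    intro t
    have := DFunLike.congr_fun hdisj t
    simpa using this
  have hf₁t₂ : f₁ t₂ = 0 := by
    have := hmul t₂
    rwa [hf₂t₂, mul_one] at this
  have hf₂t₁ : f₂ t₁ = 0 := by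
    have := hmul t₁
    rw [hf₁t₁, one_mul] at this
    exact this
  have hSf₁ : S f₁ = v - u := by
    rw [hS f₁, hf₁t₁, hf₁t₂, one_smul, zero_smul, add_zero]
  -- positivity
  have pos : ∀ f : C₀(L, ℝ), (∀ t, 0 ≤ f t) → 0 ≤ S f := by
    intro f hf
    rw [hS f]
    exact add_nonneg (aux_smul_nonneg (hf t₁) hvu) (aux_smul_nonneg (hf t₂) hu)
  -- |f t| ≤ ‖f‖
  have hcoe : ∀ (f : C₀(L, ℝ)) (t : L), |f t| ≤ ‖f‖ := by
    intro f t
    rw [← ZeroAtInftyContinuousMap.norm_toBCF_eq_norm]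
    exact f.toBCF.norm_coe_le_norm t
  -- |a • w| ≤ |a| • w for w ≥ 0
  have habs : ∀ (a : ℝ) (w : Y), 0 ≤ w → |a • w| ≤ |a| • w := by
    intro a w hw
    refine abs_le'.2 ⟨aux_smul_mono (le_abs_self a) hw, ?_⟩
    rw [← neg_smul]
    exact aux_smul_mono (neg_le_abs a) hw
  -- bound ‖S f‖ ≤ ‖f‖
  have bound : ∀ f : C₀(L, ℝ), ‖S f‖ ≤ ‖f‖ := by
    intro f
    have h1 : |S f| ≤ ‖f‖ • v := by
      calc |S f| = |f t₁ • (v - u) + f t₂ • u| := by rw [hS f]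
        _ ≤ |f t₁ • (v - u)| + |f t₂ • u| := abs_add_le _ _
        _ ≤ |f t₁| • (v - u) + |f t₂| • u :=
            add_le_add (habs _ _ hvu) (habs _ _ hu)
        _ ≤ ‖f‖ • (v - u) + ‖f‖ • u :=
            add_le_add (aux_smul_mono (hcoe f t₁) hvu) (aux_smul_mono (hcoe f t₂) hu)
        _ = ‖f‖ • v := by rw [← smul_add, sub_add_cancel]
    have h2 : |S f| ≤ |‖f‖ • v| := by
      rwa [abs_of_nonneg (aux_smul_nonneg (norm_nonneg f) hv0)]
    have h3 : ‖S f‖ ≤ ‖‖f‖ • v‖ := norm_le_norm_of_abs_le_abs h2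
    calc ‖S f‖ ≤ ‖‖f‖ • v‖ := h3
      _ = ‖f‖ := by rw [norm_smul, hv, Real.norm_of_nonneg (norm_nonneg f), mul_one]
  have hle : ‖S‖ ≤ 1 := S.opNorm_le_bound zero_le_one (fun f => by simpa using bound f)
  -- lower bound
  have hg : S (f₁ + f₂) = v := by
    rw [hS (f₁ + f₂)]
    simp only [ZeroAtInftyContinuousMap.coe_add, Pi.add_apply]
    rw [hf₁t₁, hf₁t₂, hf₂t₁, hf₂t₂]
    simp [sub_add_cancel]
  have hgnorm : ‖f₁ + f₂‖ ≤ 1 := by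
    rw [← ZeroAtInftyContinuousMap.norm_toBCF_eq_norm]
    apply BoundedContinuousFunction.norm_le (zero_le_one) |>.2
    intro t
    have h1 := hf₁ t
    have h2 := hf₂ t
    have h3 := hmul t
    rcases mul_eq_zero.1 h3 with h | h <;>
      simp only [ZeroAtInftyContinuousMap.toBCF_apply, ZeroAtInftyContinuousMap.coe_add,
        Pi.add_apply, Real.norm_eq_abs, abs_le] <;> constructor <;> nlinarith
  have hge : 1 ≤ ‖S‖ := by
    have := S.le_opNorm (f₁ + f₂)
    rw [hg, hv] at this
    nlinarith [norm_nonneg S, this, hgnorm]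
  exact ⟨pos, le_antisymm hle hge, by rw [hSf₁]⟩
end

section
/- Let Y be a uniformly monotone Banach function space with modulus δ, let 0 < ε < 1, and let f₁, f₂ be nonnegative elements of Y with ‖f₁ + f₂‖ ≤ 1 and ‖f₁ − f₂‖ ≥ 1/(1 + δ(ε/3)). Then there exist nonnegative functions h₁, h₂ ∈ Y with disjoint supports such that ‖h₁ + h₂‖ = 1 and ‖hᵢ − fᵢ‖ < ε for i = 1, 2. -/
private lemma stmt_16_aux {d u P G ε : ℝ} (hd : 0 < d) (hdle : d ≤ ε / 3)
    (hu0 : 0 < u) (hu1 : u ≤ 1) (hulb : 1 / (1 + d) ≤ u)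
    (hP : P ≤ u) (hG : G ≤ ε / 6) (hε0 : 0 < ε) :
    (u⁻¹ - 1) * P + G < ε := by
  have hd1 : (0:ℝ) < 1 + d := by linarith
  have h1 : (u⁻¹ - 1) * P ≤ (u⁻¹ - 1) * u := by
    have : (0:ℝ) ≤ u⁻¹ - 1 := by
      have : 1 ≤ u⁻¹ := by
        rw [le_inv_comm₀ one_pos hu0]; simpa using hu1
      linarith
    exact mul_le_mul_of_nonneg_left hP this
  have h2 : (u⁻¹ - 1) * u = 1 - u := by field_simp
  have h3 : 1 - u ≤ d / (1 + d) := by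
    have : 1 - d / (1 + d) = 1 / (1 + d) := by field_simp; ring
    linarith
  have h4 : d / (1 + d) ≤ d := by
    rw [div_le_iff₀ hd1]
    nlinarith [mul_nonneg hd.le hd.le]
  linarith


/-- Lemma 2.4: in a uniformly monotone Banach function space `Y` (modelled by a linear embedding
`ι` into functions on `Ω`), nonnegative `f₁, f₂` with `‖f₁ + f₂‖ ≤ 1` and
`‖f₁ - f₂‖ ≥ 1/(1 + δ(ε/3))` can be approximated within `ε` by nonnegative `h₁, h₂` with
disjoint supports and `‖h₁ + h₂‖ = 1`. -/
theorem stmt_16 {Ω : Type*} [MeasurableSpace Ω] (μ : MeasureTheory.Measure Ω)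
    {Y : Type*} [NormedAddCommGroup Y] [Lattice Y] [HasSolidNorm Y]
    [IsOrderedAddMonoid Y] [NormedSpace ℝ Y] [CompleteSpace Y]
    (ι : Y →ₗ[ℝ] (Ω → ℝ))
    (hnorm : ∀ f g : Y, (∀ x, |ι f x| = |ι g x|) → ‖f‖ = ‖g‖)
    (horder : ∀ f g : Y, f ≤ g ↔ ∀ x, ι f x ≤ ι g x)
    (hind : ∀ (f : Y) (A : Set Ω), ∃ g : Y, ∀ x, ι g x = Set.indicator A (ι f) x)
    (δ : ℝ → ℝ)
    (hδ : ∀ e : ℝ, 0 < e → e < 1 → 0 < δ e ∧ δ e ≤ e ∧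
      ∀ x y : Y, 0 ≤ x → 0 ≤ y → ‖x‖ = 1 → ‖x + y‖ ≤ 1 + δ e → ‖y‖ ≤ e)
    (ε : ℝ) (hε0 : 0 < ε) (hε1 : ε < 1)
    (f₁ f₂ : Y) (hf₁ : 0 ≤ f₁) (hf₂ : 0 ≤ f₂)
    (hsum : ‖f₁ + f₂‖ ≤ 1) (hdiff : 1 / (1 + δ (ε / 3)) ≤ ‖f₁ - f₂‖) :
    ∃ h₁ h₂ : Y, 0 ≤ h₁ ∧ 0 ≤ h₂ ∧
      Disjoint (Function.support (ι h₁)) (Function.support (ι h₂)) ∧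
      ‖h₁ + h₂‖ = 1 ∧ ‖h₁ - f₁‖ < ε ∧ ‖h₂ - f₂‖ < ε := by
  obtain ⟨hδpos, hδle, hδmon⟩ := hδ (ε / 3) (by linarith) (by linarith)
  set d := δ (ε / 3) with hd
  have hd1 : (0:ℝ) < 1 + d := by linarith
  -- pointwise order facts
  have hι0 : ∀ x, ι (0 : Y) x = 0 := by
    intro x; rw [map_zero]; rfl
  have hpt : ∀ f : Y, 0 ≤ f → ∀ x, 0 ≤ ι f x := by
    intro f hf x
    have := (horder 0 f).mp hf x
    rwa [hι0 x] at this
  -- the positive part `p` and negative part `n` of `f₁ - f₂`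
  obtain ⟨p, hp⟩ := hind (f₁ - f₂) {x | 0 < ι (f₁ - f₂) x}
  set n : Y := p - (f₁ - f₂) with hn
  have hF : ∀ x, ι (f₁ - f₂) x = ι f₁ x - ι f₂ x := by
    intro x; rw [map_sub]; rfl
  have hpx : ∀ x, ι p x = if 0 < ι (f₁ - f₂) x then ι (f₁ - f₂) x else 0 := by
    intro x; rw [hp x]; simp [Set.indicator_apply]
  have hnx : ∀ x, ι n x = ι p x - ι (f₁ - f₂) x := by
    intro x; rw [hn, map_sub]; rfl
  have hppt : ∀ x, 0 ≤ ι p x := by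
    intro x; rw [hpx x]; split_ifs with h
    · linarith
    · exact le_rfl
  have hnpt : ∀ x, 0 ≤ ι n x := by
    intro x; rw [hnx x, hpx x]
    split_ifs with h
    · simp
    · push_neg at h; linarith
  have hp0 : (0:Y) ≤ p := (horder 0 p).mpr (fun x => by rw [hι0 x]; exact hppt x)
  have hn0 : (0:Y) ≤ n := (horder 0 n).mpr (fun x => by rw [hι0 x]; exact hnpt x)
  -- |ι (p+n)| = |ι (f₁ - f₂)| pointwise
  have hpnx : ∀ x, ι (p + n) x = |ι (f₁ - f₂) x| := by
    intro x
    have : ι (p + n) x = ι p x + ι n x := by rw [map_add]; rfl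
    rw [this, hnx x, hpx x]
    split_ifs with h
    · rw [abs_of_pos h]; ring
    · push_neg at h
      rw [abs_of_nonpos h]; ring
  have hupn : ‖p + n‖ = ‖f₁ - f₂‖ := by
    apply hnorm
    intro x
    rw [hpnx x, abs_abs]
  set u : ℝ := ‖f₁ - f₂‖ with hu
  -- u ≤ 1
  have habs12 : |f₁ - f₂| ≤ f₁ + f₂ := by
    calc |f₁ - f₂| = |f₁ + -f₂| := by rw [sub_eq_add_neg]
    _ ≤ |f₁| + |-f₂| := abs_add_le _ _
    _ = f₁ + f₂ := by rw [abs_neg, abs_of_nonneg hf₁, abs_of_nonneg hf₂]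
  have hu1 : u ≤ 1 := by
    refine le_trans ?_ hsum
    apply norm_le_norm_of_abs_le_abs
    calc |f₁ - f₂| ≤ f₁ + f₂ := habs12
    _ = |f₁ + f₂| := (abs_of_nonneg (add_nonneg hf₁ hf₂)).symm
  have hulb : 1 / (1 + d) ≤ u := hdiff
  have hu0 : 0 < u := lt_of_lt_of_le (by positivity) hulb
  have huinv : u⁻¹ ≤ 1 + d := by
    rw [inv_le_comm₀ hu0 hd1]
    rwa [one_div] at hulb
  have huinv1 : 1 ≤ u⁻¹ := by
    rw [le_inv_comm₀ one_pos hu0]; simpa using hu1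
  -- the common part g
  set g : Y := f₁ - p with hg
  have hg2 : f₂ - n = g := by rw [hg, hn]; abel
  have hg0 : (0:Y) ≤ g := by
    refine (horder 0 g).mpr (fun x => ?_)
    rw [hι0 x]
    have : ι g x = ι f₁ x - ι p x := by rw [hg, map_sub]; rfl
    rw [this, hpx x]
    split_ifs with h
    · rw [hF x] at h ⊢
      have := hpt f₂ hf₂ x
      linarith
    · have := hpt f₁ hf₁ x
      linarith
  have hsmul : ∀ (c : ℝ), 0 ≤ c → ∀ v : Y, 0 ≤ v → 0 ≤ c • v := by
    intro c hc v hv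
    refine (horder 0 _).mpr fun x => ?_
    rw [hι0 x]
    have : ι (c • v) x = c * ι v x := by rw [map_smul]; rfl
    rw [this]
    exact mul_nonneg hc (hpt v hv x)
  -- uniform monotonicity gives ‖g‖ ≤ u * ε / 6
  have hsumdecomp : p + n + (g + g) = f₁ + f₂ := by
    rw [hg, hn]; abel
  have hgnorm : ‖g‖ ≤ ε / 6 := by
    have hx0 : (0:Y) ≤ u⁻¹ • (p + n) :=
      hsmul _ (by positivity) _ (add_nonneg hp0 hn0)
    have hy0 : (0:Y) ≤ u⁻¹ • (g + g) :=
      hsmul _ (by positivity) _ (add_nonneg hg0 hg0)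
    have hxn : ‖u⁻¹ • (p + n)‖ = 1 := by
      rw [norm_smul, hupn, Real.norm_eq_abs, abs_of_pos (by positivity)]
      field_simp
    have hxy : ‖u⁻¹ • (p + n) + u⁻¹ • (g + g)‖ ≤ 1 + d := by
      rw [← smul_add, hsumdecomp, norm_smul, Real.norm_eq_abs,
        abs_of_pos (by positivity : (0:ℝ) < u⁻¹)]
      calc u⁻¹ * ‖f₁ + f₂‖ ≤ u⁻¹ * 1 := by
            apply mul_le_mul_of_nonneg_left hsum (by positivity)
      _ = u⁻¹ := mul_one _
      _ ≤ 1 + d := huinv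
    have hy := hδmon _ _ hx0 hy0 hxn hxy
    rw [norm_smul, Real.norm_eq_abs, abs_of_pos (by positivity : (0:ℝ) < u⁻¹)] at hy
    have hgg : ‖g + g‖ = 2 * ‖g‖ := by
      have : g + g = (2:ℝ) • g := by rw [two_smul]
      rw [this, norm_smul]; simp
    rw [hgg] at hy
    have : 2 * ‖g‖ ≤ u * (ε / 3) := by
      rw [← mul_le_mul_iff_right₀ (by positivity : (0:ℝ) < u⁻¹)]
      calc u⁻¹ * (2 * ‖g‖) ≤ ε / 3 := hy
      _ = u⁻¹ * (u * (ε / 3)) := by field_simp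
    nlinarith [hu1, hε0]
  -- norms of p and n
  have hpn0 : (0:Y) ≤ p + n := add_nonneg hp0 hn0
  have hpnorm : ‖p‖ ≤ u := by
    rw [← hupn]
    apply norm_le_norm_of_abs_le_abs
    rw [abs_of_nonneg hp0, abs_of_nonneg hpn0]
    simpa using hn0
  have hnnorm : ‖n‖ ≤ u := by
    rw [← hupn]
    apply norm_le_norm_of_abs_le_abs
    rw [abs_of_nonneg hn0, abs_of_nonneg hpn0]
    simpa using hp0
  -- final candidates
  refine ⟨u⁻¹ • p, u⁻¹ • n, hsmul _ (by positivity) _ hp0,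
    hsmul _ (by positivity) _ hn0, ?_, ?_, ?_, ?_⟩
  · -- disjoint supports
    rw [Set.disjoint_left]
    intro x hx1 hx2
    have h1 : ι (u⁻¹ • p) x = u⁻¹ * ι p x := by rw [map_smul]; rfl
    have h2 : ι (u⁻¹ • n) x = u⁻¹ * ι n x := by rw [map_smul]; rfl
    rw [Function.mem_support, h1] at hx1
    rw [Function.mem_support, h2] at hx2
    have hpne : ι p x ≠ 0 := by intro h; apply hx1; rw [h, mul_zero]
    have hnne : ι n x ≠ 0 := by intro h; apply hx2; rw [h, mul_zero]
    rw [hpx x] at hpne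
    by_cases h : 0 < ι (f₁ - f₂) x
    · apply hnne
      rw [hnx x, hpx x, if_pos h, sub_self]
    · exact hpne (if_neg h)
  · -- norm one
    rw [← smul_add, norm_smul, hupn, Real.norm_eq_abs, abs_of_pos (by positivity)]
    field_simp
  · -- ‖u⁻¹ • p - f₁‖ < ε
    have hdec : u⁻¹ • p - f₁ = (u⁻¹ - 1) • p - g := by
      rw [hg, sub_smul, one_smul]; abel
    rw [hdec]
    calc ‖(u⁻¹ - 1) • p - g‖ ≤ ‖(u⁻¹ - 1) • p‖ + ‖g‖ := norm_sub_le _ _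
    _ = (u⁻¹ - 1) * ‖p‖ + ‖g‖ := by
        rw [norm_smul, Real.norm_eq_abs, abs_of_nonneg (by linarith)]
    _ < ε := stmt_16_aux hδpos hδle hu0 hu1 hulb hpnorm hgnorm (by linarith)
  · -- ‖u⁻¹ • n - f₂‖ < ε
    have hdec : u⁻¹ • n - f₂ = (u⁻¹ - 1) • n - g := by
      rw [← hg2, sub_smul, one_smul]; abel
    rw [hdec]
    calc ‖(u⁻¹ - 1) • n - g‖ ≤ ‖(u⁻¹ - 1) • n‖ + ‖g‖ := norm_sub_le _ _
    _ = (u⁻¹ - 1) * ‖n‖ + ‖g‖ := by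
        rw [norm_smul, Real.norm_eq_abs, abs_of_nonneg (by linarith)]
    _ < ε := stmt_16_aux hδpos hδle hu0 hu1 hulb hnnorm hgnorm (by linarith)
end
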